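/- For every integer m ≥ 1, every integer r ≥ 2, every vector a = (a_1,…,a_r) of nonzero real numbers with a_1 + a_2 ≠ 0, and every x = (x_1,…,x_r) ∈ ℝ^r, one has ζ_fml(1−m, a, x) = ζ_fml(1−m, (a_1, a_1+a_2, a_3,…,a_r), (x_1−x_2+1, x_2, x_3,…,x_r)) + ζ_fml(1−m, (a_1+a_2, a_2, a_3,…,a_r), (x_1, x_2−x_1, x_3,…,x_r)). -/

import Mathlib

open scoped BigOperators

/-- The formal multiple zeta value `zetaFml m a x = ζ_fml(1 - m, a, x)` of the paper:
`(-1)^r (m-1)! ∑_{l, Σ l i = m + r - 1} ∏_i B_{l i}(x i) * (a i)^(l i - 1) / (l i)!`,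
where `B_l` is the `l`-th Bernoulli polynomial (normalized with `B₁(X) = X - 1/2`)
and `(a i)^(l i - 1)` is an integer (`zpow`) power. -/
noncomputable def zetaFml (m : ℕ) {r : ℕ} (a x : Fin r → ℝ) : ℝ :=
  (-1 : ℝ) ^ r * (Nat.factorial (m - 1)) *
    ∑ l ∈ Finset.Nat.antidiagonalTuple r (m + r - 1),
      ∏ i, Polynomial.aeval (x i) (Polynomial.bernoulli (l i)) * a i ^ ((l i : ℤ) - 1)
        / (Nat.factorial (l i))

namespace ZetaFmlAux

open Nat PowerSeries Polynomial Finset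

/-- Rescaled exponential series `e^{at}`. -/
noncomputable def E (a : ℝ) : PowerSeries ℝ := rescale a (PowerSeries.exp ℝ)

/-- Bernoulli generating series `∑ Bₙ(x) aⁿ tⁿ / n!`. -/
noncomputable def G (x a : ℝ) : PowerSeries ℝ :=
  rescale a (PowerSeries.mk fun n => aeval x ((1 / n ! : ℚ) • Polynomial.bernoulli n))

lemma E_mul (u v : ℝ) : E u * E v = E (u + v) :=
  PowerSeries.exp_mul_exp_eq_exp_add u v

lemma G_mul (x a : ℝ) : G x a * (E a - 1) = PowerSeries.C a * PowerSeries.X * E (x * a) := by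
  have h := Polynomial.bernoulli_generating_function (A := ℝ) x
  calc G x a * (E a - 1)
      = rescale a ((PowerSeries.mk fun n => aeval x ((1 / n ! : ℚ) • Polynomial.bernoulli n))
          * (PowerSeries.exp ℝ - 1)) := by
        rw [map_mul, map_sub, map_one]; rfl
    _ = rescale a (PowerSeries.X * rescale x (PowerSeries.exp ℝ)) := by rw [h]
    _ = PowerSeries.C a * PowerSeries.X * E (x * a) := by
        rw [map_mul, rescale_X, rescale_rescale]; rfl

lemma E_sub_one_ne_zero {a : ℝ} (ha : a ≠ 0) : E a - 1 ≠ 0 := by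
  intro h
  have := congrArg (PowerSeries.coeff 1) h
  simp [E, coeff_rescale, PowerSeries.coeff_exp, PowerSeries.coeff_one, ha] at this

lemma key (x y a b : ℝ) (ha : a ≠ 0) (hb : b ≠ 0) (hc : a + b ≠ 0) :
    PowerSeries.C (a + b) * G x a * G y b
      = PowerSeries.C b * G (x - y + 1) a * G y (a + b) + PowerSeries.C a * G x (a + b) * G (y - x) b := by
  have hW : (E a - 1) * (E b - 1) * (E (a + b) - 1) ≠ 0 :=
    mul_ne_zero (mul_ne_zero (E_sub_one_ne_zero ha) (E_sub_one_ne_zero hb))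
      (E_sub_one_ne_zero hc)
  apply mul_right_cancel₀ hW
  have h1 : ∀ (s x u y v w : ℝ),
      (PowerSeries.C s * G x u * G y v) * ((E u - 1) * (E v - 1) * (E w - 1))
        = PowerSeries.C s * PowerSeries.C u * PowerSeries.C v * PowerSeries.X ^ 2 * (E (x * u + y * v + w) - E (x * u + y * v)) := by
    intro s x u y v w
    calc (PowerSeries.C s * G x u * G y v) * ((E u - 1) * (E v - 1) * (E w - 1))
        = PowerSeries.C s * (G x u * (E u - 1)) * (G y v * (E v - 1)) * (E w - 1) := by ring
      _ = PowerSeries.C s * (PowerSeries.C u * PowerSeries.X * E (x * u)) * (PowerSeries.C v * PowerSeries.X * E (y * v)) * (E w - 1) := by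
          rw [G_mul, G_mul]
      _ = PowerSeries.C s * PowerSeries.C u * PowerSeries.C v * PowerSeries.X ^ 2 *
            (E (x * u) * E (y * v) * E w - E (x * u) * E (y * v)) := by ring
      _ = PowerSeries.C s * PowerSeries.C u * PowerSeries.C v * PowerSeries.X ^ 2 * (E (x * u + y * v + w) - E (x * u + y * v)) := by
          rw [E_mul, E_mul]
  have t1 := h1 (a + b) x a y b (a + b)
  have t2 := h1 b (x - y + 1) a y (a + b) b
  have t3 := h1 a x (a + b) (y - x) b a
  rw [show (x - y + 1) * a + y * (a + b) + b = x * a + y * b + (a + b) by ring,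
      show (x - y + 1) * a + y * (a + b) = x * a + y * b + a by ring] at t2
  rw [show x * (a + b) + (y - x) * b + a = x * a + y * b + a by ring,
      show x * (a + b) + (y - x) * b = x * a + y * b by ring] at t3
  calc (PowerSeries.C (a + b) * G x a * G y b) * ((E a - 1) * (E b - 1) * (E (a + b) - 1))
      = PowerSeries.C (a + b) * PowerSeries.C a * PowerSeries.C b * PowerSeries.X ^ 2
          * (E (x * a + y * b + (a + b)) - E (x * a + y * b)) := t1
    _ = PowerSeries.C b * PowerSeries.C a * PowerSeries.C (a + b) * PowerSeries.X ^ 2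
          * (E (x * a + y * b + (a + b)) - E (x * a + y * b + a))
        + PowerSeries.C a * PowerSeries.C (a + b) * PowerSeries.C b * PowerSeries.X ^ 2
          * (E (x * a + y * b + a) - E (x * a + y * b)) := by ring
    _ = (PowerSeries.C b * G (x - y + 1) a * G y (a + b)) * ((E a - 1) * (E (a + b) - 1) * (E b - 1))
        + (PowerSeries.C a * G x (a + b) * G (y - x) b) * ((E (a + b) - 1) * (E b - 1) * (E a - 1)) := by
          rw [t2, t3]
    _ = (PowerSeries.C b * G (x - y + 1) a * G y (a + b) + PowerSeries.C a * G x (a + b) * G (y - x) b)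
          * ((E a - 1) * (E b - 1) * (E (a + b) - 1)) := by ring

/-- The series whose coefficients are the summand factors of `zetaFml`. -/
noncomputable def F (x a : ℝ) : PowerSeries ℝ :=
  PowerSeries.mk fun n => aeval x (Polynomial.bernoulli n) * a ^ ((n : ℤ) - 1) / n !

lemma CF {a : ℝ} (x : ℝ) (ha : a ≠ 0) : PowerSeries.C a * F x a = G x a := by
  ext n
  rw [PowerSeries.coeff_C_mul, F, PowerSeries.coeff_mk, G, coeff_rescale,
    PowerSeries.coeff_mk, map_smul, Rat.smul_def]
  rw [zpow_sub_one₀ ha, zpow_natCast]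
  push_cast
  have hfac : (n ! : ℝ) ≠ 0 := Nat.cast_ne_zero.mpr n.factorial_ne_zero
  field_simp

lemma key' (x y a b : ℝ) (ha : a ≠ 0) (hb : b ≠ 0) (hc : a + b ≠ 0) :
    F x a * F y b = F (x - y + 1) a * F y (a + b) + F x (a + b) * F (y - x) b := by
  have hC : PowerSeries.C a * PowerSeries.C b * PowerSeries.C (a + b) ≠ (0 : PowerSeries ℝ) := by
    rw [← map_mul, ← map_mul]
    intro h
    have h2 := congrArg (PowerSeries.constantCoeff) h
    rw [PowerSeries.constantCoeff_C, map_zero] at h2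
    exact mul_ne_zero (mul_ne_zero ha hb) hc h2
  apply mul_left_cancel₀ hC
  have hkey := key x y a b ha hb hc
  calc PowerSeries.C a * PowerSeries.C b * PowerSeries.C (a + b) * (F x a * F y b)
      = PowerSeries.C (a + b) * (PowerSeries.C a * F x a) * (PowerSeries.C b * F y b) := by ring
    _ = PowerSeries.C (a + b) * G x a * G y b := by rw [CF x ha, CF y hb]
    _ = PowerSeries.C b * G (x - y + 1) a * G y (a + b) + PowerSeries.C a * G x (a + b) * G (y - x) b := hkey
    _ = PowerSeries.C b * (PowerSeries.C a * F (x - y + 1) a) * (PowerSeries.C (a + b) * F y (a + b))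
        + PowerSeries.C a * (PowerSeries.C (a + b) * F x (a + b)) * (PowerSeries.C b * F (y - x) b) := by
          rw [CF _ ha, CF _ hc, CF _ hc, CF _ hb]
    _ = PowerSeries.C a * PowerSeries.C b * PowerSeries.C (a + b)
          * (F (x - y + 1) a * F y (a + b) + F x (a + b) * F (y - x) b) := by ring

lemma sum_antidiagonalTuple_succ {M : Type*} [AddCommMonoid M] {k n : ℕ}
    (f : (Fin (k + 1) → ℕ) → M) :
    ∑ l ∈ Finset.Nat.antidiagonalTuple (k + 1) n, f l
      = ∑ p ∈ Finset.HasAntidiagonal.antidiagonal n,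
          ∑ t ∈ Finset.Nat.antidiagonalTuple k p.2, f (Fin.cons p.1 t) := by
  rw [Finset.sum_sigma']
  refine Finset.sum_nbij' (fun l => ⟨(l 0, ∑ i, l (Fin.succ i)), Fin.tail l⟩)
    (fun q => Fin.cons q.1.1 q.2) ?_ ?_ ?_ ?_ ?_
  · intro l hl
    rw [Finset.Nat.mem_antidiagonalTuple] at hl
    rw [Finset.mem_sigma, Finset.HasAntidiagonal.mem_antidiagonal, Finset.Nat.mem_antidiagonalTuple]
    constructor
    · rw [← hl, Fin.sum_univ_succ]
    · rfl
  · intro q hq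
    rw [Finset.mem_sigma, Finset.HasAntidiagonal.mem_antidiagonal, Finset.Nat.mem_antidiagonalTuple] at hq
    rw [Finset.Nat.mem_antidiagonalTuple, Fin.sum_univ_succ]
    simp only [Fin.cons_zero, Fin.cons_succ]
    rw [hq.2, hq.1]
  · intro l _
    exact Fin.cons_self_tail l
  · intro q hq
    rw [Finset.mem_sigma, Finset.Nat.mem_antidiagonalTuple] at hq
    ext1
    · simp only [Fin.cons_zero, Fin.cons_succ]
      rw [hq.2]
    · simp [Fin.tail_cons]
  · intro l _
    rw [Fin.cons_self_tail]

lemma coeff_prod_tuple (k : ℕ) (f : Fin k → PowerSeries ℝ) (n : ℕ) :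
    PowerSeries.coeff n (∏ i, f i)
      = ∑ l ∈ Finset.Nat.antidiagonalTuple k n, ∏ i, PowerSeries.coeff (l i) (f i) := by
  induction k generalizing n with
  | zero =>
    cases n with
    | zero => simp
    | succ n => simp [PowerSeries.coeff_one]
  | succ k ih =>
    rw [Fin.prod_univ_succ, PowerSeries.coeff_mul, sum_antidiagonalTuple_succ]
    refine Finset.sum_congr rfl fun p _ => ?_
    rw [ih, Finset.mul_sum]
    refine Finset.sum_congr rfl fun t _ => ?_
    rw [Fin.prod_univ_succ, Fin.cons_zero]
    congr 1

lemma zetaFml_eq_coeff (m : ℕ) {r : ℕ} (a x : Fin r → ℝ) :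
    zetaFml m a x
      = (-1 : ℝ) ^ r * (Nat.factorial (m - 1)) *
          PowerSeries.coeff (m + r - 1) (∏ i, F (x i) (a i)) := by
  rw [zetaFml, coeff_prod_tuple]
  congr 1
  refine Finset.sum_congr rfl fun l _ => Finset.prod_congr rfl fun i _ => ?_
  rw [F, PowerSeries.coeff_mk]

end ZetaFmlAux

open ZetaFmlAux
theorem zetaFml_cone_subdivision (m : ℕ) (hm : 1 ≤ m) (r : ℕ) (a x : Fin (r + 2) → ℝ)
    (ha : ∀ i, a i ≠ 0) (h12 : a 0 + a 1 ≠ 0) :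
    zetaFml m a x
      = zetaFml m (Function.update a 1 (a 0 + a 1)) (Function.update x 0 (x 0 - x 1 + 1))
        + zetaFml m (Function.update a 0 (a 0 + a 1)) (Function.update x 1 (x 1 - x 0)) := by
  have hne01 : (0 : Fin (r + 2)) ≠ 1 := Fin.zero_ne_one
  have hne10 : (1 : Fin (r + 2)) ≠ 0 := Fin.zero_ne_one.symm
  have hsuccsucc0 : ∀ i : Fin r, (i.succ.succ : Fin (r + 2)) ≠ 0 := fun i => Fin.succ_ne_zero _
  have hsuccsucc1 : ∀ i : Fin r, (i.succ.succ : Fin (r + 2)) ≠ 1 := by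
    intro i h
    rw [← Fin.succ_zero_eq_one, Fin.succ_inj] at h
    exact Fin.succ_ne_zero _ h
  -- the product identity
  have hprod :
      (∏ i, F (x i) (a i))
        = (∏ i, F (Function.update x 0 (x 0 - x 1 + 1) i) (Function.update a 1 (a 0 + a 1) i))
          + (∏ i, F (Function.update x 1 (x 1 - x 0) i) (Function.update a 0 (a 0 + a 1) i)) := by
    have hkey := key' (x 0) (x 1) (a 0) (a 1) (ha 0) (ha 1) h12
    have e1 : (∏ i, F (x i) (a i))
        = F (x 0) (a 0) * F (x 1) (a 1) * ∏ i : Fin r, F (x i.succ.succ) (a i.succ.succ) := by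
      rw [Fin.prod_univ_succ, Fin.prod_univ_succ, Fin.succ_zero_eq_one, ← mul_assoc]
    have e2 : (∏ i, F (Function.update x 0 (x 0 - x 1 + 1) i) (Function.update a 1 (a 0 + a 1) i))
        = F (x 0 - x 1 + 1) (a 0) * F (x 1) (a 0 + a 1)
            * ∏ i : Fin r, F (x i.succ.succ) (a i.succ.succ) := by
      rw [Fin.prod_univ_succ, Fin.prod_univ_succ, Fin.succ_zero_eq_one, ← mul_assoc,
        Function.update_self, Function.update_of_ne hne01, Function.update_self,
        Function.update_of_ne hne10]
      congr 1
    have e3 : (∏ i, F (Function.update x 1 (x 1 - x 0) i) (Function.update a 0 (a 0 + a 1) i))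
        = F (x 0) (a 0 + a 1) * F (x 1 - x 0) (a 1)
            * ∏ i : Fin r, F (x i.succ.succ) (a i.succ.succ) := by
      rw [Fin.prod_univ_succ, Fin.prod_univ_succ, Fin.succ_zero_eq_one, ← mul_assoc,
        Function.update_self, Function.update_of_ne hne10, Function.update_self,
        Function.update_of_ne hne01]
      congr 1
    rw [e1, e2, e3, ← add_mul, ← hkey]
  rw [zetaFml_eq_coeff, zetaFml_eq_coeff, zetaFml_eq_coeff, hprod, map_add]
  ring
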